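/- arXiv:2404.15496 — 2 statements merged into one kernel-verified Lean document; each statement's English description precedes it below -/
import Mathlib

section
/- The map sending a binary relation R ⊆ Σ* × Σ* to its induced closed subset of the typed set of synchronous words is a bijection between binary relations on Σ* and closed subsets of the free synchronous algebra Sync(Σ). -/
/-- Synchronous words over an alphabet `α`, organized by their five types:
`ll` = (Σ×Σ)*, `ll→lb` = (Σ×Σ)*(Σ×{⊥})*, `lb` = (Σ×{⊥})*,
`ll→bl` = (Σ×Σ)*({⊥}×Σ)*, `bl` = ({⊥}×Σ)*.  A word of type `lb` (resp. `bl`,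
and the padded parts of mixed types) is represented by the list of its proper letters. -/
inductive SyncW (α : Type) : Type
  | wll : List (α × α) → SyncW α
  | wlllb : List (α × α) → List α → SyncW α
  | wlb : List α → SyncW α
  | wllbl : List (α × α) → List α → SyncW α
  | wbl : List α → SyncW α

namespace SyncW

variable {α : Type}

/-- The base identifications of the dependency relation on synchronous words. -/
inductive dep0 : SyncW α → SyncW α → Prop
  | ll_lllb (w : List (α × α)) : dep0 (wll w) (wlllb w [])
  | ll_llbl (w : List (α × α)) : dep0 (wll w) (wllbl w [])
  | lb_lllb (s : List α) : dep0 (wlb s) (wlllb [] s)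
  | bl_llbl (s : List α) : dep0 (wbl s) (wllbl [] s)

/-- The dependency relation on `SyncW α`: reflexive-symmetric closure of `dep0`. -/
def dep (x y : SyncW α) : Prop := x = y ∨ dep0 x y ∨ dep0 y x

/-- Decoding a synchronous word into the pair of words it represents
(stripping padding symbols). -/
def decode : SyncW α → List α × List α
  | wll w => (w.map Prod.fst, w.map Prod.snd)
  | wlllb w s => (w.map Prod.fst ++ s, w.map Prod.snd)
  | wlb s => (s, [])
  | wllbl w s => (w.map Prod.fst, w.map Prod.snd ++ s)
  | wbl s => ([], s)

end SyncW

/-- The closed subset of `SyncW α` induced by a binary relation `R ⊆ α* × α*`. -/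
def projS {α : Type} (R : Set (List α × List α)) : Set (SyncW α) :=
  { x | x.decode ∈ R }

/-- A subset of the dependent set `SyncW α` is closed when it is saturated under
the dependency relation. -/
def ClosedW {α : Type} (C : Set (SyncW α)) : Prop :=
  ∀ x y : SyncW α, SyncW.dep x y → (x ∈ C ↔ y ∈ C)

namespace SyncW

variable {α : Type}

private lemma map_fst_zip_take : ∀ (u v : List α),
    (u.zip v).map Prod.fst = u.take v.length
  | [], _ => by simp
  | _ :: _, [] => by simp
  | a :: u, b :: v => by simp [map_fst_zip_take u v]

private lemma map_snd_zip_take : ∀ (u v : List α),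
    (u.zip v).map Prod.snd = v.take u.length
  | [], _ => by simp
  | _ :: _, [] => by simp
  | a :: u, b :: v => by simp [map_snd_zip_take u v]

private lemma zip_fst_app : ∀ (w : List (α × α)) (s : List α),
    (w.map Prod.fst ++ s).zip (w.map Prod.snd) = w
  | [], s => by simp
  | p :: w, s => by simp [zip_fst_app w s]

private lemma zip_snd_app : ∀ (w : List (α × α)) (s : List α),
    (w.map Prod.fst).zip (w.map Prod.snd ++ s) = w
  | [], s => by simp
  | p :: w, s => by simp [zip_snd_app w s]

private lemma zip_map_fst_snd (w : List (α × α)) :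
    (w.map Prod.fst).zip (w.map Prod.snd) = w := by
  rw [List.zip_map']; simp

/-- Canonical synchronous word representing a pair of words. -/
def canon (p : List α × List α) : SyncW α :=
  if p.2.length ≤ p.1.length then wlllb (p.1.zip p.2) (p.1.drop p.2.length)
  else wllbl (p.1.zip p.2) (p.2.drop p.1.length)

lemma decode_canon (p : List α × List α) : (canon p).decode = p := by
  obtain ⟨u, v⟩ := p
  unfold canon
  split <;> rename_i h
  · simp only [decode, map_fst_zip_take, map_snd_zip_take]
    rw [List.take_append_drop, List.take_of_length_le h]
  · simp only [decode, map_fst_zip_take, map_snd_zip_take]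
    rw [List.take_append_drop, List.take_of_length_le (le_of_not_ge h)]

lemma mem_iff_canon {C : Set (SyncW α)} (hC : ClosedW C) (x : SyncW α) :
    x ∈ C ↔ canon x.decode ∈ C := by
  cases x with
  | wll w =>
    have : canon (decode (wll w)) = wlllb w [] := by
      simp [canon, decode, zip_map_fst_snd]
    rw [this]
    exact hC _ _ (Or.inr (Or.inl (dep0.ll_lllb w)))
  | wlllb w s =>
    have : canon (decode (wlllb w s)) = wlllb w s := by
      simp only [canon, decode]
      refine (if_pos (by simp)).trans ?_
      congr 1
      · exact zip_fst_app w s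
      · simp
    rw [this]
  | wlb s =>
    have : canon (decode (wlb s)) = wlllb [] s := by
      simp [canon, decode]
    rw [this]
    exact hC _ _ (Or.inr (Or.inl (dep0.lb_lllb s)))
  | wllbl w s =>
    rcases eq_or_ne s [] with rfl | hs
    · have : canon (decode (wllbl w [])) = wlllb w [] := by
        simp [canon, decode, zip_map_fst_snd]
      rw [this]
      rw [hC _ _ (Or.inr (Or.inr (dep0.ll_llbl w)))]
      exact hC _ _ (Or.inr (Or.inl (dep0.ll_lllb w)))
    · have : canon (decode (wllbl w s)) = wllbl w s := by
        simp only [canon, decode]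
        refine (if_neg (by simp [hs])).trans ?_
        congr 1
        · exact zip_snd_app w s
        · simp
      rw [this]
  | wbl s =>
    rcases eq_or_ne s [] with rfl | hs
    · have : canon (decode (wbl ([] : List α))) = wlllb [] [] := by
        simp [canon, decode]
      rw [this]
      rw [hC _ _ (Or.inr (Or.inl (dep0.bl_llbl [])))]
      rw [hC _ _ (Or.inr (Or.inr (dep0.ll_llbl [])))]
      exact hC _ _ (Or.inr (Or.inl (dep0.ll_lllb [])))
    · have : canon (decode (wbl s)) = wllbl [] s := by
        simp [canon, decode, hs]
      rw [this]
      exact hC _ _ (Or.inr (Or.inl (dep0.bl_llbl s)))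

lemma decode_dep0 {x y : SyncW α} (h : dep0 x y) : x.decode = y.decode := by
  cases h <;> simp [decode]

end SyncW

/-- The map `R ↦ proj R` is a bijection between binary relations
on `α*` and closed subsets of the dependent set of synchronous words `Sync(α)`. -/
theorem projS_bijection_onto_closed_subsets (α : Type) :
    (∀ R : Set (List α × List α), ClosedW (projS R)) ∧
    Function.Injective (fun R : Set (List α × List α) => projS R) ∧
    (∀ C : Set (SyncW α), ClosedW C → ∃ R : Set (List α × List α), projS R = C) := by
  refine ⟨?_, ?_, ?_⟩
  · intro R x y hxy
    rcases hxy with rfl | h | h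
    · rfl
    · simp [projS, SyncW.decode_dep0 h]
    · simp [projS, SyncW.decode_dep0 h]
  · intro R R' h
    simp only at h
    ext p
    have := Set.ext_iff.mp h (SyncW.canon p)
    simpa [projS, SyncW.decode_canon] using this
  · intro C hC
    refine ⟨{p | SyncW.canon p ∈ C}, ?_⟩
    ext x
    simp only [projS, Set.mem_setOf_eq]
    exact (SyncW.mem_iff_canon hC x).symm
end

section
/- Fix p, q ≥ 1 and I ⊆ Z/pZ, J ⊆ Z/qZ. If the relation R^{I,J} = {(u,v) | (|u| > |v| and |u|−|v| mod p ∈ I) or (|u| < |v| and |v|−|u| mod q ∈ J)} over alphabet Σ = {a,b} is a group relation, then 0 ∉ I and 0 ∉ J. -/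
/-- The paired alphabet `Σ₂⊥ = (Σ×Σ) ⊕ (Σ×{⊥}) ⊕ ({⊥}×Σ)`. -/
def PL (α : Type) : Type := (α × α) ⊕ α ⊕ α

/-- Well-formed words over `Σ₂⊥`. -/
def WF {α : Type} (l : List (PL α)) : Prop :=
  ∃ (w : List (α × α)) (s : List α),
    l = w.map Sum.inl ++ s.map (fun a => Sum.inr (Sum.inl a)) ∨
    l = w.map Sum.inl ++ s.map (fun a => Sum.inr (Sum.inr a))

/-- Decode a word over `Σ₂⊥` into the pair of words it represents. -/
def decodeW {α : Type} (l : List (PL α)) : List α × List α :=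
  (l.filterMap (fun x => match x with
      | Sum.inl p => some p.1
      | Sum.inr (Sum.inl a) => some a
      | Sum.inr (Sum.inr _) => none),
   l.filterMap (fun x => match x with
      | Sum.inl p => some p.2
      | Sum.inr (Sum.inl _) => none
      | Sum.inr (Sum.inr a) => some a))

/-- A relation `R ⊆ α* × α*` is a group relation when there are a finite group
`G`, a monoid morphism `ψ : (Σ₂⊥)* → G` and `Acc ⊆ G` such that every
well-formed word encodes a pair of `R` iff its image under `ψ` lies in `Acc`. -/
def IsGroupRel {α : Type} (R : Set (List α × List α)) : Prop :=
  ∃ (G : Type) (_ : Group G) (_ : Finite G) (ψ : FreeMonoid (PL α) →* G)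
    (Acc : Set G),
    ∀ l : List (PL α), WF l → (decodeW l ∈ R ↔ ψ (FreeMonoid.ofList l) ∈ Acc)

/-- The relation `R^{I,J}`: pairs `(u,v)` with `|u| > |v|` and
`|u| − |v| mod p ∈ I`, or `|u| < |v|` and `|v| − |u| mod q ∈ J`. -/
def RIJ (α : Type) (p q : ℕ) (I : Set (ZMod p)) (J : Set (ZMod q)) :
    Set (List α × List α) :=
  { uv | (uv.2.length < uv.1.length ∧
            ((uv.1.length - uv.2.length : ℕ) : ZMod p) ∈ I) ∨
         (uv.1.length < uv.2.length ∧
            ((uv.2.length - uv.1.length : ℕ) : ZMod q) ∈ J) }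

lemma psi_rep {G : Type} [Monoid G] (ψ : FreeMonoid (PL Bool) →* G) (x : PL Bool) (k : ℕ) :
    ψ (FreeMonoid.ofList (List.replicate k x)) = (ψ (FreeMonoid.of x))^k := by
  induction k with
  | zero => simp
  | succ k ih =>
    rw [List.replicate_succ, pow_succ']
    rw [show FreeMonoid.ofList (x :: List.replicate k x)
        = FreeMonoid.of x * FreeMonoid.ofList (List.replicate k x) from rfl, map_mul, ih]

lemma dec1 (k : ℕ) (a : Bool) :
    decodeW (List.replicate k (Sum.inr (Sum.inl a) : PL Bool)) = (List.replicate k a, []) := by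
  induction k with
  | zero => rfl
  | succ k ih =>
    have e : decodeW (List.replicate (k+1) (Sum.inr (Sum.inl a) : PL Bool)) =
        (a :: (decodeW (List.replicate k (Sum.inr (Sum.inl a) : PL Bool))).1,
         (decodeW (List.replicate k (Sum.inr (Sum.inl a) : PL Bool))).2) := rfl
    rw [e, ih]; rfl

lemma dec2 (k : ℕ) (a : Bool) :
    decodeW (List.replicate k (Sum.inr (Sum.inr a) : PL Bool)) = ([], List.replicate k a) := by
  induction k with
  | zero => rfl
  | succ k ih =>
    have e : decodeW (List.replicate (k+1) (Sum.inr (Sum.inr a) : PL Bool)) =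
        ((decodeW (List.replicate k (Sum.inr (Sum.inr a) : PL Bool))).1,
         a :: (decodeW (List.replicate k (Sum.inr (Sum.inr a) : PL Bool))).2) := rfl
    rw [e, ih]; rfl

lemma dec3 (k : ℕ) (a b : Bool) :
    decodeW (List.replicate k (Sum.inl (a, b) : PL Bool)) = (List.replicate k a, List.replicate k b) := by
  induction k with
  | zero => rfl
  | succ k ih =>
    have e : decodeW (List.replicate (k+1) (Sum.inl (a, b) : PL Bool)) =
        (a :: (decodeW (List.replicate k (Sum.inl (a, b) : PL Bool))).1,
         b :: (decodeW (List.replicate k (Sum.inl (a, b) : PL Bool))).2) := rfl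
    rw [e, ih]; rfl

/-- For `p, q ≥ 1` and `I ⊆ ℤ/pℤ`, `J ⊆ ℤ/qℤ`, if the
relation `R^{I,J}` over the two-letter alphabet `Σ = {a,b}` is a group relation,
then `0 ∉ I` and `0 ∉ J`. -/
theorem RIJ_groupRel_necessary (p q : ℕ) (hp : 1 ≤ p) (hq : 1 ≤ q)
    (I : Set (ZMod p)) (J : Set (ZMod q))
    (h : IsGroupRel (RIJ Bool p q I J)) :
    (0 : ZMod p) ∉ I ∧ (0 : ZMod q) ∉ J := by
  obtain ⟨G, _, _, ψ, Acc, hspec⟩ := h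
  set n := Nat.card G with hn
  have hn1 : 1 ≤ n := Nat.card_pos
  have hone : ∀ x : PL Bool, ∀ m : ℕ,
      ψ (FreeMonoid.ofList (List.replicate (m * n) x)) = 1 := by
    intro x m
    rw [psi_rep, pow_mul, pow_card_eq_one']
  -- the diagonal word: not in R, ψ value = 1, so 1 ∉ Acc
  have hdiag : (1 : G) ∉ Acc := by
    have hwf : WF (List.replicate (p * n) (Sum.inl (true, true) : PL Bool)) :=
      ⟨List.replicate (p * n) (true, true), [], Or.inl (by simp [List.map_replicate]; exact (List.append_nil _).symm)⟩
    have := hspec _ hwf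
    rw [dec3, hone (Sum.inl (true, true) : PL Bool) p] at this
    intro hAcc
    have hR := this.mpr hAcc
    simp [RIJ] at hR
  constructor
  · intro h0
    have hwf : WF (List.replicate (p * n) (Sum.inr (Sum.inl true) : PL Bool)) :=
      ⟨[], List.replicate (p * n) true, Or.inl (by simp [List.map_replicate]; exact (List.nil_append _).symm)⟩
    have := hspec _ hwf
    rw [dec1, hone (Sum.inr (Sum.inl true) : PL Bool) p] at this
    exact hdiag (this.mp (Or.inl ⟨by simpa using Nat.mul_pos hp hn1, by
      simpa [Nat.cast_mul, ZMod.natCast_self] using h0⟩))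
  · intro h0
    have hwf : WF (List.replicate (q * n) (Sum.inr (Sum.inr true) : PL Bool)) :=
      ⟨[], List.replicate (q * n) true, Or.inr (by simp [List.map_replicate]; exact (List.nil_append _).symm)⟩
    have := hspec _ hwf
    rw [dec2, hone (Sum.inr (Sum.inr true) : PL Bool) q] at this
    exact hdiag (this.mp (Or.inr ⟨by simpa using Nat.mul_pos hq hn1, by
      simpa [Nat.cast_mul, ZMod.natCast_self] using h0⟩))
end
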